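/- arXiv:1101.3647 — 2 statements merged into one kernel-verified Lean document; each statement's English description precedes it below -/
import Mathlib

section
/- Let E be a number field and let Tr : E × E → ℚ be the trace pairing (x,y) ↦ Tr_{E/ℚ}(xy). If V and W are finite-dimensional E-vector spaces and ψ : V × W → ℚ is a ℚ-bilinear form satisfying ψ(e·v, w) = ψ(v, e·w) for all e ∈ E, then there exists a unique E-bilinear form φ : V × W → E such that ψ(v,w) = Tr_{E/ℚ}(φ(v,w)) for all v, w. -/
/-- If `ψ : V × W → ℚ` is a `ℚ`-bilinear form on finite-dimensional `E`-vector spaces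
satisfying `ψ(e·v, w) = ψ(v, e·w)`, then there is a unique `E`-bilinear form `φ` with
`ψ(v,w) = Tr_{E/ℚ}(φ(v,w))`. -/
theorem exists_unique_bilinear_lift_of_trace
    {E : Type*} [Field E] [NumberField E]
    {V W : Type*} [AddCommGroup V] [Module E V] [FiniteDimensional E V]
    [AddCommGroup W] [Module E W] [FiniteDimensional E W]
    [Module ℚ V] [IsScalarTower ℚ E V] [Module ℚ W] [IsScalarTower ℚ E W]
    (ψ : V →ₗ[ℚ] W →ₗ[ℚ] ℚ)
    (hψ : ∀ (e : E) (v : V) (w : W), ψ (e • v) w = ψ v (e • w)) :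
    ∃! φ : V →ₗ[E] W →ₗ[E] E,
      ∀ (v : V) (w : W), ψ v w = Algebra.trace ℚ E (φ v w) := by
  classical
  haveI : FiniteDimensional ℚ W := Module.Finite.trans E W
  -- The "compose with trace" map
  let T : (W →ₗ[E] E) →ₗ[ℚ] (W →ₗ[ℚ] ℚ) :=
    { toFun := fun f => (Algebra.trace ℚ E).comp (f.restrictScalars ℚ)
      map_add' := by intro f g; ext w; simp
      map_smul' := by intro q f; ext w; simp }
  have hT : ∀ (f : W →ₗ[E] E) (w : W), T f w = Algebra.trace ℚ E (f w) := fun _ _ => rfl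
  have hinj : Function.Injective T := by
    rw [injective_iff_map_eq_zero]
    intro f hf
    ext w
    have h0 : ∀ e : E, Algebra.traceForm ℚ E (f w) e = 0 := by
      intro e
      have h1 : T f (e • w) = 0 := by rw [hf]; rfl
      rw [hT, map_smul, smul_eq_mul, mul_comm] at h1
      simpa [Algebra.traceForm_apply] using h1
    exact (traceForm_nondegenerate ℚ E).1 (f w) h0
  have hrank : Module.finrank ℚ (W →ₗ[E] E) = Module.finrank ℚ (W →ₗ[ℚ] ℚ) := by
    have h1 : Module.finrank ℚ E * Module.finrank E (W →ₗ[E] E)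
        = Module.finrank ℚ (W →ₗ[E] E) := Module.finrank_mul_finrank ℚ E _
    have h2 : Module.finrank ℚ E * Module.finrank E W = Module.finrank ℚ W :=
      Module.finrank_mul_finrank ℚ E W
    rw [← h1, Module.finrank_linearMap, Module.finrank_self, mul_one,
      Module.finrank_linearMap, Module.finrank_self, mul_one, h2]
  let Te : (W →ₗ[E] E) ≃ₗ[ℚ] (W →ₗ[ℚ] ℚ) := LinearMap.linearEquivOfInjective T hinj hrank
  have hTe : ∀ f, Te f = T f := fun _ => rfl
  have hkey : ∀ v : V, T (Te.symm (ψ v)) = ψ v := by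
    intro v; rw [← hTe]; exact Te.apply_symm_apply _
  let φ : V →ₗ[E] W →ₗ[E] E :=
    { toFun := fun v => Te.symm (ψ v)
      map_add' := by
        intro v v'
        apply hinj
        rw [map_add, map_add]
      map_smul' := by
        intro e v
        simp only [RingHom.id_apply]
        apply hinj
        ext w
        rw [hkey]
        have h2 : T (e • Te.symm (ψ v)) w = Algebra.trace ℚ E (e * (Te.symm (ψ v)) w) := rfl
        rw [h2, ← smul_eq_mul, ← map_smul, ← hT (Te.symm (ψ v)), hkey v]
        exact hψ e v w }
  refine ⟨φ, fun v w => ?_, fun φ' hφ' => ?_⟩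
  · have h := LinearMap.congr_fun (hkey v) w
    rw [hT] at h
    exact h.symm
  · ext v w
    have h1 : T (φ' v) = ψ v := by ext w'; rw [hT]; exact (hφ' v w').symm
    have : φ' v = Te.symm (ψ v) := by
      apply hinj; rw [hkey, h1]
    rw [this]; rfl
end

section
/- Let F be a closed subset of ℂⁿ (with the Euclidean topology) that is not contained in any countable union of proper algebraic subvarieties of ℂⁿ. If for every field automorphism σ of ℂ the set σ(F) = {(σ(x₁),…,σ(xₙ)) : (x₁,…,xₙ) ∈ F} is closed in ℂⁿ, then F = ℂⁿ. -/
open MvPolynomial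
namespace CGSAux
noncomputable section
variable {n : ℕ} {ι : Type}

lemma countable_poly (n : ℕ) (ι : Type) [Countable ι] :
    Countable (MvPolynomial (Fin n ⊕ ι) ℚ) :=
  (AddMonoidAlgebra.coeff_injective (R := ℚ) (M := (Fin n ⊕ ι) →₀ ℕ)).countable

def Φ (n : ℕ) (w : ι → ℂ) : MvPolynomial (Fin n ⊕ ι) ℚ →ₐ[ℚ] MvPolynomial (Fin n) ℂ :=
  (mapAlgHom (aeval w)).comp (sumAlgEquiv ℚ (Fin n) ι).toAlgHom

lemma Φ_injective (w : ι → ℂ) (hw : AlgebraicIndependent ℚ w) :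
    Function.Injective (Φ n w) := by
  have h1 : Function.Injective
      (mapAlgHom (R := ℚ) (σ := Fin n) (aeval w : MvPolynomial ι ℚ →ₐ[ℚ] ℂ)) := by
    have : Function.Injective (aeval w : MvPolynomial ι ℚ →ₐ[ℚ] ℂ) :=
      algebraicIndependent_iff_injective_aeval.mp hw
    exact map_injective ((aeval w : MvPolynomial ι ℚ →ₐ[ℚ] ℂ) : MvPolynomial ι ℚ →+* ℂ) this
  exact h1.comp (sumAlgEquiv ℚ (Fin n) ι).injective

lemma eval_Φ (w : ι → ℂ) (x : Fin n → ℂ) (q : MvPolynomial (Fin n ⊕ ι) ℚ) :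
    eval x (Φ n w q) = aeval (Sum.elim x w) q := by
  have h : (((aeval x : MvPolynomial (Fin n) ℂ →ₐ[ℂ] ℂ).restrictScalars ℚ).comp (Φ n w)) =
      aeval (Sum.elim x w) := by
    apply algHom_ext
    rintro (j | i) <;>
      simp [Φ, sumAlgEquiv_X_inl, sumAlgEquiv_X_inr, sumRingEquiv, mvPolynomialEquivMvPolynomial,
        sumToIter_Xl, sumToIter_Xr]
  rw [← h]
  simp only [AlgHom.comp_apply, AlgHom.coe_restrictScalars']
  rw [← coe_aeval_eq_eval]
  rfl

lemma exists_T [Countable ι] (w : ι → ℂ) (hw : AlgebraicIndependent ℚ w) :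
    ∃ T : Set (MvPolynomial (Fin n) ℂ), T.Countable ∧ (∀ r ∈ T, r ≠ 0) ∧
      ∀ x : Fin n → ℂ,
        (¬ AlgebraicIndependent ℚ (Sum.elim x w)) ↔ ∃ r ∈ T, eval x r = 0 := by
  haveI := countable_poly n ι
  refine ⟨Φ n w '' {q | q ≠ 0}, (Set.to_countable _).image _, ?_, ?_⟩
  · rintro r ⟨q, hq, rfl⟩ h0
    exact hq (Φ_injective w hw (by simpa using h0))
  · intro x
    constructor
    · intro hdep
      rw [algebraicIndependent_iff] at hdep
      push_neg at hdep
      obtain ⟨q, hq0, hqne⟩ := hdep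
      exact ⟨Φ n w q, ⟨q, hqne, rfl⟩, by rw [eval_Φ]; exact hq0⟩
    · rintro ⟨r, ⟨q, hq, rfl⟩, hx⟩ hind
      rw [eval_Φ w x q] at hx
      exact hq (algebraicIndependent_iff.mp hind q hx)

lemma dense_nonzero {r : MvPolynomial (Fin n) ℂ} (hr : r ≠ 0) :
    Dense {x : Fin n → ℂ | eval x r ≠ 0} := by
  have hex : ∃ x₀, eval x₀ r ≠ 0 := by
    by_contra h
    push_neg at h
    exact hr (MvPolynomial.funext fun x => by simp [h x])
  obtain ⟨x₀, hx₀⟩ := hex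
  rw [Metric.dense_iff]
  intro x ε hε
  set g : Polynomial ℂ :=
    aeval (fun j => Polynomial.C (x j) + Polynomial.X * Polynomial.C (x₀ j - x j)) r with hgdef
  have hgeval : ∀ t : ℂ, Polynomial.eval t g = eval (fun j => x j + t * (x₀ j - x j)) r := by
    intro t
    have h : ((Polynomial.aeval t : Polynomial ℂ →ₐ[ℂ] ℂ).comp
        (aeval (fun j => Polynomial.C (x j) + Polynomial.X * Polynomial.C (x₀ j - x j)) :
          MvPolynomial (Fin n) ℂ →ₐ[ℂ] Polynomial ℂ)) =
        aeval (fun j => x j + t * (x₀ j - x j)) := by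
      apply algHom_ext
      intro j
      simp
    have h2 := congrArg (fun F : MvPolynomial (Fin n) ℂ →ₐ[ℂ] ℂ => F r) h
    simp only [AlgHom.comp_apply] at h2
    rw [← Polynomial.coe_aeval_eq_eval, hgdef]
    rw [h2, ← coe_aeval_eq_eval]
    rfl
  have hg1 : Polynomial.eval 1 g = eval x₀ r := by
    rw [hgeval]
    have hx0 : (fun j => x j + 1 * (x₀ j - x j)) = x₀ := by funext j; ring
    rw [hx0]
  have hgne : g ≠ 0 := fun h0 => hx₀ (by rw [← hg1, h0, Polynomial.eval_zero])
  -- choose a small real t avoiding the finitely many roots of g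
  set M : ℝ := ∑ j, ‖x₀ j - x j‖ with hM
  have hM0 : 0 ≤ M := Finset.sum_nonneg fun j _ => norm_nonneg _
  have hMj : ∀ j, ‖x₀ j - x j‖ ≤ M :=
    fun j => Finset.single_le_sum (fun j _ => norm_nonneg (x₀ j - x j)) (Finset.mem_univ j)
  set δ : ℝ := ε / (M + 1) with hδ
  have hδ0 : 0 < δ := div_pos hε (by linarith)
  have hinf : (Set.Ioo (0:ℝ) δ).Infinite := Set.infinite_coe_iff.mp (Set.Ioo.infinite hδ0)
  have hinf2 : ((fun s : ℝ => (s : ℂ)) '' Set.Ioo 0 δ).Infinite :=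
    hinf.image (Set.injOn_of_injective Complex.ofReal_injective)
  have hroots : ({t : ℂ | g.IsRoot t}).Finite := Polynomial.finite_setOf_isRoot hgne
  obtain ⟨t, htmem, htroot⟩ := (hinf2.diff hroots).nonempty
  obtain ⟨s, hs, rfl⟩ := htmem
  refine ⟨fun j => x j + (s : ℂ) * (x₀ j - x j), ?_, ?_⟩
  · rw [Metric.mem_ball]
    have : ∀ j, dist (x j + (s : ℂ) * (x₀ j - x j)) (x j) ≤ s * M := by
      intro j
      rw [dist_eq_norm]
      have : x j + (s : ℂ) * (x₀ j - x j) - x j = (s : ℂ) * (x₀ j - x j) := by ring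
      rw [this, norm_mul, Complex.norm_real, Real.norm_eq_abs, abs_of_pos hs.1]
      exact mul_le_mul_of_nonneg_left (hMj j) hs.1.le
    calc dist (fun j => x j + (s : ℂ) * (x₀ j - x j)) x ≤ s * M := by
          refine dist_pi_le_iff (mul_nonneg hs.1.le hM0) |>.2 this
      _ ≤ s * (M + 1) := by nlinarith [hs.1]
      _ < δ * (M + 1) := by nlinarith [hs.2, hM0]
      _ = ε := by rw [hδ]; field_simp [show M + 1 ≠ 0 by linarith]
  · intro h0
    exact htroot (by simpa [Polynomial.IsRoot, hgeval] using h0)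

def chainAux {α : Type*} (target : ℕ → Set α) (P : ∀ k, (Fin k → α) → Prop)
    (hbase : P 0 (fun i => i.elim0))
    (hstep : ∀ k (v : Fin k → α), P k v →
      ∃ x ∈ target k, P (k+1) (fun i : Fin (k+1) => if h : (i:ℕ) < k then v ⟨i,h⟩ else x)) :
    (k : ℕ) → {v : Fin k → α // P k v ∧ ∀ i : Fin k, v i ∈ target i.1}
  | 0 => ⟨fun i => i.elim0, hbase, fun i => i.elim0⟩
  | (k+1) => by
    refine ⟨fun i : Fin (k+1) => if h : (i:ℕ) < k then
        (chainAux target P hbase hstep k).1 ⟨i,h⟩ else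
        (hstep k (chainAux target P hbase hstep k).1
          (chainAux target P hbase hstep k).2.1).choose,
      (hstep k _ (chainAux target P hbase hstep k).2.1).choose_spec.2, ?_⟩
    intro i
    by_cases h : (i:ℕ) < k
    · simp only [dif_pos h]
      exact (chainAux target P hbase hstep k).2.2 ⟨i,h⟩
    · simp only [dif_neg h]
      have hik : (i:ℕ) = k := by omega
      rw [hik]
      exact (hstep k _ (chainAux target P hbase hstep k).2.1).choose_spec.1

lemma chainAux_coh {α : Type*} (target : ℕ → Set α) (P : ∀ k, (Fin k → α) → Prop)
    (hbase : P 0 (fun i => i.elim0))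
    (hstep : ∀ k (v : Fin k → α), P k v →
      ∃ x ∈ target k, P (k+1) (fun i : Fin (k+1) => if h : (i:ℕ) < k then v ⟨i,h⟩ else x)) :
    ∀ (k' k : ℕ) (h : k ≤ k') (i : ℕ) (hik : i < k) (hik' : i < k'),
      (chainAux target P hbase hstep k').1 ⟨i, hik'⟩ =
        (chainAux target P hbase hstep k).1 ⟨i, hik⟩ := by
  intro k'
  induction k' with
  | zero => intro k h i hik hik'; omega
  | succ k'' ih =>
    intro k h i hik hik'
    by_cases hk : k = k'' + 1
    · subst hk; rfl
    · have hk2 : k ≤ k'' := by omega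
      have hi : i < k'' := lt_of_lt_of_le hik hk2
      have h1 : (chainAux target P hbase hstep (k''+1)).1 ⟨i, hik'⟩ =
          (chainAux target P hbase hstep k'').1 ⟨i, hi⟩ := by
        show (if h : i < k'' then _ else _) = _
        rw [dif_pos hi]
      rw [h1, ih k hk2 i hik hi]

lemma exists_seq_rec {α : Type*} (target : ℕ → Set α) (P : ∀ k, (Fin k → α) → Prop)
    (hbase : P 0 (fun i => i.elim0))
    (hstep : ∀ k (v : Fin k → α), P k v →
      ∃ x ∈ target k, P (k+1) (fun i : Fin (k+1) => if h : (i:ℕ) < k then v ⟨i,h⟩ else x)) :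
    ∃ z : ℕ → α, (∀ k, z k ∈ target k) ∧ ∀ k, P k (fun i : Fin k => z (i:ℕ)) := by
  set C := chainAux target P hbase hstep with hC
  refine ⟨fun k => (C (k+1)).1 ⟨k, k.lt_succ_self⟩, fun k => ?_, fun k => ?_⟩
  · exact (C (k+1)).2.2 ⟨k, k.lt_succ_self⟩
  · have hfun : (fun i : Fin k => (C ((i:ℕ)+1)).1 ⟨(i:ℕ), Nat.lt_succ_self _⟩) = (C k).1 := by
      funext i
      exact (chainAux_coh target P hbase hstep k ((i:ℕ)+1) i.2 (i:ℕ)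
        (Nat.lt_succ_self _) i.2).symm ▸
        (chainAux_coh target P hbase hstep k ((i:ℕ)+1) i.2 (i:ℕ) (Nat.lt_succ_self _) i.2).symm
    rw [hfun]
    exact (C k).2.1

lemma extend_indep {k : ℕ} {v : Fin k → Fin n → ℂ} {x : Fin n → ℂ}
    (h : AlgebraicIndependent ℚ (Sum.elim x (fun p : Fin k × Fin n => v p.1 p.2))) :
    AlgebraicIndependent ℚ (fun p : Fin (k+1) × Fin n =>
      (if h' : (p.1:ℕ) < k then v ⟨p.1,h'⟩ else x) p.2) := by
  set e : Fin (k+1) × Fin n → (Fin n) ⊕ (Fin k × Fin n) :=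
    fun p => if h' : (p.1:ℕ) < k then Sum.inr (⟨p.1,h'⟩, p.2) else Sum.inl p.2 with he
  have heinj : Function.Injective e := by
    rintro ⟨a1,a2⟩ ⟨b1,b2⟩ hab
    by_cases h1 : (a1:ℕ) < k <;> by_cases h2 : (b1:ℕ) < k
    · simp only [e, dif_pos h1, dif_pos h2, Sum.inr.injEq, Prod.mk.injEq, Fin.mk.injEq] at hab
      exact Prod.ext (Fin.ext hab.1) hab.2
    · simp only [e, dif_pos h1, dif_neg h2] at hab
      exact absurd hab (by simp)
    · simp only [e, dif_neg h1, dif_pos h2] at hab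
      exact absurd hab (by simp)
    · simp only [e, dif_neg h1, dif_neg h2, Sum.inl.injEq] at hab
      have ha := a1.isLt
      have hb := b1.isLt
      exact Prod.ext (Fin.ext (show (a1:ℕ) = (b1:ℕ) by omega)) hab
  have h2 := h.comp e heinj
  have hfun : (Sum.elim x (fun p : Fin k × Fin n => v p.1 p.2)) ∘ e =
      (fun p : Fin (k+1) × Fin n => (if h' : (p.1:ℕ) < k then v ⟨p.1,h'⟩ else x) p.2) := by
    funext p
    by_cases h' : (p.1:ℕ) < k <;> simp [e, h']
  rwa [hfun] at h2

lemma indep_of_truncations {f : ℕ × Fin n → ℂ}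
    (h : ∀ k : ℕ, AlgebraicIndependent ℚ (fun p : Fin k × Fin n => f (p.1.val, p.2))) :
    AlgebraicIndependent ℚ f := by
  rw [algebraicIndependent_iff]
  intro p hp
  obtain ⟨s, q, rfl⟩ := exists_finset_rename p
  set k := (s.sup fun a => a.1) + 1 with hk
  have hlt : ∀ a : {x // x ∈ s}, a.1.1 < k :=
    fun a => Nat.lt_succ_of_le (Finset.le_sup (f := fun a => a.1) a.2)
  set g : {a // a ∈ s} → Fin k × Fin n := fun a => (⟨a.1.1, hlt a⟩, a.1.2) with hg
  have hginj : Function.Injective g := by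
    intro a b hab
    apply Subtype.ext
    have h1 : a.1.1 = b.1.1 := congrArg (fun z : Fin k × Fin n => (z.1 : ℕ)) hab
    have h2 : a.1.2 = b.1.2 := congrArg (fun z : Fin k × Fin n => z.2) hab
    exact Prod.ext h1 h2
  have hcomp := (h k).comp g hginj
  have hfun : ((fun p : Fin k × Fin n => f (p.1.val, p.2)) ∘ g) = f ∘ Subtype.val := by
    funext a; rfl
  rw [hfun] at hcomp
  rw [aeval_rename] at hp
  rw [algebraicIndependent_iff.mp hcomp q hp, map_zero]

lemma exists_good_in_open [Countable ι] (w : ι → ℂ) (hw : AlgebraicIndependent ℚ w)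
    (U : Set (Fin n → ℂ)) (hU : IsOpen U) (hne : U.Nonempty) :
    ∃ y ∈ U, AlgebraicIndependent ℚ (Sum.elim y w) := by
  obtain ⟨T, hTc, hT0, hTiff⟩ := exists_T (n := n) w hw
  set S : Set (Set (Fin n → ℂ)) := (fun r => {x | eval x r ≠ 0}) '' T with hS
  have hdense : Dense (⋂₀ S) := by
    apply dense_sInter_of_isOpen
    · rintro s ⟨r, hr, rfl⟩
      show IsOpen ((fun x => eval x r) ⁻¹' ({0}ᶜ))
      exact r.continuous_eval.isOpen_preimage _ isOpen_compl_singleton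
    · exact hTc.image _
    · rintro s ⟨r, hr, rfl⟩
      exact dense_nonzero (hT0 r hr)
  obtain ⟨y, hyU, hyS⟩ := hdense.inter_open_nonempty U hU hne
  refine ⟨y, hyU, ?_⟩
  by_contra hdep
  obtain ⟨r, hrT, hr0⟩ := (hTiff y).mp hdep
  exact (Set.mem_sInter.mp hyS _ ⟨r, hrT, rfl⟩) hr0

lemma exists_good_in_F [Countable ι] (F : Set (Fin n → ℂ))
    (hnot : ∀ p : ℕ → MvPolynomial (Fin n) ℂ, (∀ i, p i ≠ 0) →
      ¬ (F ⊆ ⋃ i, {x | eval x (p i) = 0}))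
    (w : ι → ℂ) (hw : AlgebraicIndependent ℚ w) :
    ∃ x ∈ F, AlgebraicIndependent ℚ (Sum.elim x w) := by
  obtain ⟨T, hTc, hT0, hTiff⟩ := exists_T (n := n) w hw
  by_contra hcon
  push_neg at hcon
  obtain ⟨f, hf⟩ := (hTc.insert 1).exists_eq_range ⟨1, Set.mem_insert _ _⟩
  refine hnot f (fun i => ?_) ?_
  · have : f i ∈ insert (1:MvPolynomial (Fin n) ℂ) T := hf ▸ Set.mem_range_self i
    rcases Set.mem_insert_iff.mp this with h | h
    · rw [h]; exact one_ne_zero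
    · exact hT0 _ h
  · intro x hxF
    obtain ⟨r, hrT, hr⟩ := (hTiff x).mp (hcon x hxF)
    have hmem : r ∈ insert (1:MvPolynomial (Fin n) ℂ) T := Set.mem_insert_of_mem _ hrT
    rw [hf] at hmem
    obtain ⟨i, rfl⟩ := hmem
    exact Set.mem_iUnion.2 ⟨i, hr⟩

lemma exists_seq (F : Set (Fin n → ℂ))
    (hnot : ∀ p : ℕ → MvPolynomial (Fin n) ℂ, (∀ i, p i ≠ 0) →
      ¬ (F ⊆ ⋃ i, {x | eval x (p i) = 0}))
    (u : ℕ → Set (Fin n → ℂ)) (hu : ∀ m, IsOpen (u m)) (hun : ∀ m, (u m).Nonempty) :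
    ∃ z : ℕ → (Fin n → ℂ), (∀ m, z (2*m) ∈ F) ∧ (∀ m, z (2*m+1) ∈ u m) ∧
      AlgebraicIndependent ℚ (fun p : ℕ × Fin n => z p.1 p.2) := by
  set target : ℕ → Set (Fin n → ℂ) := fun k => if k % 2 = 0 then F else u (k / 2) with htarget
  set P : ∀ k, (Fin k → (Fin n → ℂ)) → Prop :=
    fun k v => AlgebraicIndependent ℚ (fun p : Fin k × Fin n => v p.1 p.2) with hP
  have hbase : P 0 (fun i => i.elim0) := by
    have : IsEmpty (Fin 0 × Fin n) := inferInstance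
    exact algebraicIndependent_empty_type
  have hstep : ∀ k (v : Fin k → (Fin n → ℂ)), P k v →
      ∃ x ∈ target k, P (k+1) (fun i : Fin (k+1) => if h : (i:ℕ) < k then v ⟨i,h⟩ else x) := by
    intro k v hv
    by_cases hk : k % 2 = 0
    · obtain ⟨x, hxF, hx⟩ := exists_good_in_F (ι := Fin k × Fin n) F hnot (fun p : Fin k × Fin n => v p.1 p.2) hv
      refine ⟨x, by simp [htarget, hk, hxF], extend_indep hx⟩
    · obtain ⟨x, hxU, hx⟩ := exists_good_in_open (ι := Fin k × Fin n) (fun p => v p.1 p.2) hv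
        (u (k/2)) (hu _) (hun _)
      refine ⟨x, by simp [htarget, hk, hxU], extend_indep hx⟩
  obtain ⟨z, hz1, hz2⟩ := exists_seq_rec target P hbase hstep
  refine ⟨z, fun m => ?_, fun m => ?_, ?_⟩
  · have := hz1 (2*m)
    simpa [htarget, Nat.mul_mod_right] using this
  · have := hz1 (2*m+1)
    have hmod : (2*m+1) % 2 = 1 := by omega
    have hdiv : (2*m+1) / 2 = m := by omega
    simpa [htarget, hmod, hdiv] using this
  · exact indep_of_truncations fun k => hz2 k

lemma exists_basis_superset {s : Set ℂ} (hs : AlgebraicIndependent ℚ ((↑) : s → ℂ)) :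
    ∃ u : Set ℂ, s ⊆ u ∧ IsTranscendenceBasis ℚ ((↑) : u → ℂ) := by
  obtain ⟨u, hsu, hu⟩ := exists_maximal_algebraicIndependent s Set.univ (Set.subset_univ _) hs
  refine ⟨u, hsu, hu.1.1, fun t ht hst => ?_⟩
  simp only [Subtype.range_coe_subtype, Set.setOf_mem_eq] at *
  exact hu.eq_of_le ⟨ht, Set.subset_univ _⟩ hst

/-- The middle ring equivalence between the adjoined subalgebras. -/
def midEquiv {u v : Set ℂ} (hu : IsTranscendenceBasis ℚ ((↑) : u → ℂ))
    (hv : IsTranscendenceBasis ℚ ((↑) : v → ℂ)) (e : u ≃ v) :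
    Algebra.adjoin ℚ (Set.range ((↑) : u → ℂ)) ≃+* Algebra.adjoin ℚ (Set.range ((↑) : v → ℂ)) :=
  (hu.1.aevalEquiv.symm.trans ((renameEquiv ℚ e).trans hv.1.aevalEquiv)).toRingEquiv

/-- A field automorphism of `ℂ` carrying one transcendence basis to another. -/
def basisEquiv {u v : Set ℂ} (hu : IsTranscendenceBasis ℚ ((↑) : u → ℂ))
    (hv : IsTranscendenceBasis ℚ ((↑) : v → ℂ)) (e : u ≃ v) : ℂ ≃+* ℂ :=
  letI := IsAlgClosed.isAlgClosure_of_transcendence_basis _ hu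
  letI := IsAlgClosed.isAlgClosure_of_transcendence_basis _ hv
  IsAlgClosure.equivOfEquiv ℂ ℂ (midEquiv hu hv e)

lemma basisEquiv_apply {u v : Set ℂ} (hu : IsTranscendenceBasis ℚ ((↑) : u → ℂ))
    (hv : IsTranscendenceBasis ℚ ((↑) : v → ℂ)) (e : u ≃ v) (a : u) :
    basisEquiv hu hv e (a : ℂ) = (e a : ℂ) := by
  letI := IsAlgClosed.isAlgClosure_of_transcendence_basis _ hu
  letI := IsAlgClosed.isAlgClosure_of_transcendence_basis _ hv
  have h1 : (a : ℂ) =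
      algebraMap (Algebra.adjoin ℚ (Set.range ((↑) : u → ℂ))) ℂ (hu.1.aevalEquiv (X a)) := by
    rw [hu.1.algebraMap_aevalEquiv, aeval_X]
  show IsAlgClosure.equivOfEquiv ℂ ℂ (midEquiv hu hv e) (a : ℂ) = (e a : ℂ)
  rw [h1, IsAlgClosure.equivOfEquiv_algebraMap]
  have h2 : midEquiv hu hv e (hu.1.aevalEquiv (X a)) = hv.1.aevalEquiv (X (e a)) := by
    simp [midEquiv, AlgEquiv.trans_apply]
  rw [h2, hv.1.algebraMap_aevalEquiv, aeval_X]

end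
end CGSAux

open CGSAux Cardinal in
set_option maxHeartbeats 1600000 in
/-- A closed subset `F ⊆ ℂⁿ` not contained in any countable union of proper algebraic
subvarieties, all of whose conjugates by field automorphisms of `ℂ` are closed, must be
all of `ℂⁿ`. -/
theorem closed_galois_stable_not_in_countable_union_eq_univ
    {n : ℕ} (F : Set (Fin n → ℂ)) (hF : IsClosed F)
    (hnot : ∀ p : ℕ → MvPolynomial (Fin n) ℂ, (∀ i, p i ≠ 0) →
      ¬ (F ⊆ ⋃ i, {x | eval x (p i) = 0}))
    (hgal : ∀ σ : ℂ ≃+* ℂ, IsClosed ((fun x : Fin n → ℂ => fun j => σ (x j)) '' F)) :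
    F = Set.univ := by
  classical
  -- countable basis of the topology
  obtain ⟨b, hbc, hbem, hbasis⟩ := TopologicalSpace.exists_countable_basis (Fin n → ℂ)
  have hbne : b.Nonempty := by
    obtain ⟨V, hVb, -, -⟩ :=
      hbasis.exists_subset_of_mem_open (Set.mem_univ (fun _ => 0 : Fin n → ℂ)) isOpen_univ
    exact ⟨V, hVb⟩
  obtain ⟨uu, huu⟩ := hbc.exists_eq_range hbne
  have huo : ∀ m, IsOpen (uu m) := fun m => hbasis.isOpen (huu ▸ Set.mem_range_self m)
  have hunon : ∀ m, (uu m).Nonempty := by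
    intro m
    rw [Set.nonempty_iff_ne_empty]
    intro h
    exact hbem (h ▸ (huu ▸ Set.mem_range_self m : uu m ∈ b))
  -- the master sequence
  obtain ⟨z, hzF, hzU, hzind⟩ := exists_seq F hnot uu huo hunon
  have hXind : AlgebraicIndependent ℚ (fun p : ℕ × Fin n => z (2*p.1) p.2) := by
    have hinj : Function.Injective (fun p : ℕ × Fin n => ((2*p.1, p.2) : ℕ × Fin n)) := by
      intro a b hab
      have h1 := congrArg Prod.fst hab
      have h2 := congrArg Prod.snd hab
      simp only at h1 h2
      exact Prod.ext (by omega) h2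
    have h := hzind.comp (fun p : ℕ × Fin n => ((2*p.1, p.2) : ℕ × Fin n)) hinj
    simpa [Function.comp_def] using h
  have hYind : AlgebraicIndependent ℚ (fun p : ℕ × Fin n => z (2*p.1+1) p.2) := by
    have hinj : Function.Injective (fun p : ℕ × Fin n => ((2*p.1+1, p.2) : ℕ × Fin n)) := by
      intro a b hab
      have h1 := congrArg Prod.fst hab
      have h2 := congrArg Prod.snd hab
      simp only at h1 h2
      exact Prod.ext (by omega) h2
    have h := hzind.comp (fun p : ℕ × Fin n => ((2*p.1+1, p.2) : ℕ × Fin n)) hinj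
    simpa [Function.comp_def] using h
  set Xf : ℕ × Fin n → ℂ := fun p => z (2*p.1) p.2 with hXf
  set Yf : ℕ × Fin n → ℂ := fun p => z (2*p.1+1) p.2 with hYf
  have hXinj : Function.Injective Xf := hXind.injective
  have hYinj : Function.Injective Yf := hYind.injective
  obtain ⟨uX, hsubX, hbX⟩ := exists_basis_superset hXind.coe_range
  obtain ⟨uY, hsubY, hbY⟩ := exists_basis_superset hYind.coe_range
  -- cardinalities
  have hcardX : #↥uX = Cardinal.continuum := by
    have h := IsAlgClosed.cardinal_eq_cardinal_transcendence_basis_of_aleph0_lt _ hbX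
      (le_of_eq Cardinal.mkRat) (mk_complex ▸ Cardinal.aleph0_lt_continuum)
    simp only [Cardinal.lift_id, mk_complex] at h; exact h.symm
  have hcardY : #↥uY = Cardinal.continuum := by
    have h := IsAlgClosed.cardinal_eq_cardinal_transcendence_basis_of_aleph0_lt _ hbY
      (le_of_eq Cardinal.mkRat) (mk_complex ▸ Cardinal.aleph0_lt_continuum)
    simp only [Cardinal.lift_id, mk_complex] at h; exact h.symm
  haveI : Countable ↥(Set.range Xf) := (Set.countable_range Xf).to_subtype
  haveI : Countable ↥(Set.range Yf) := (Set.countable_range Yf).to_subtype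
  have hdiffX : #↥(uX \ Set.range Xf) = Cardinal.continuum := by
    have h1 : #↥(uX \ Set.range Xf) + #↥(Set.range Xf) = #↥uX :=
      Cardinal.mk_diff_add_mk hsubX
    rw [hcardX, add_comm] at h1
    exact Cardinal.eq_of_add_eq_of_aleph0_le h1
      (lt_of_le_of_lt Cardinal.mk_le_aleph0 Cardinal.aleph0_lt_continuum)
      Cardinal.aleph0_lt_continuum.le
  have hdiffY : #↥(uY \ Set.range Yf) = Cardinal.continuum := by
    have h1 : #↥(uY \ Set.range Yf) + #↥(Set.range Yf) = #↥uY :=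
      Cardinal.mk_diff_add_mk hsubY
    rw [hcardY, add_comm] at h1
    exact Cardinal.eq_of_add_eq_of_aleph0_le h1
      (lt_of_le_of_lt Cardinal.mk_le_aleph0 Cardinal.aleph0_lt_continuum)
      Cardinal.aleph0_lt_continuum.le
  -- the matching equivalence of bases
  set eRange : ↥(Set.range Xf) ≃ ↥(Set.range Yf) :=
    (Equiv.ofInjective Xf hXinj).symm.trans (Equiv.ofInjective Yf hYinj) with heRange
  have e0 : ↥(uX \ Set.range Xf) ≃ ↥(uY \ Set.range Yf) :=
    Classical.choice (Cardinal.eq.1 (hdiffX.trans hdiffY.symm))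
  have disjX : Disjoint (uX \ Set.range Xf) (Set.range Xf) := Set.disjoint_sdiff_left
  have disjY : Disjoint (uY \ Set.range Yf) (Set.range Yf) := Set.disjoint_sdiff_left
  set e : ↥uX ≃ ↥uY :=
    (Equiv.setCongr (Set.diff_union_of_subset hsubX).symm).trans
      ((Equiv.Set.union disjX).trans ((e0.sumCongr eRange).trans
        ((Equiv.Set.union disjY).symm.trans
          (Equiv.setCongr (Set.diff_union_of_subset hsubY))))) with he
  have heval : ∀ p : ℕ × Fin n, ((e ⟨Xf p, hsubX (Set.mem_range_self p)⟩ : ↥uY) : ℂ) = Yf p := by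
    intro p
    have hmem : (Xf p) ∈ Set.range Xf := Set.mem_range_self p
    rw [he]
    simp only [Equiv.trans_apply]
    have s1 : (Equiv.setCongr (Set.diff_union_of_subset hsubX).symm)
        ⟨Xf p, hsubX (Set.mem_range_self p)⟩ = ⟨Xf p, by
          rw [Set.diff_union_of_subset hsubX]; exact hsubX hmem⟩ := rfl
    rw [s1]
    rw [Equiv.Set.union_apply_right disjX hmem]
    simp only [Equiv.sumCongr_apply, Sum.map_inr]
    have s2 : eRange ⟨Xf p, hmem⟩ = ⟨Yf p, Set.mem_range_self p⟩ := by
      rw [heRange]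
      simp only [Equiv.trans_apply]
      have : (⟨Xf p, hmem⟩ : ↥(Set.range Xf)) = Equiv.ofInjective Xf hXinj p := by
        apply Subtype.ext
        simp [Equiv.ofInjective_apply]
      rw [this, Equiv.symm_apply_apply]
      apply Subtype.ext
      simp [Equiv.ofInjective_apply]
    rw [s2, Equiv.Set.union_symm_apply_right]
    rfl
  set σ : ℂ ≃+* ℂ := basisEquiv hbX hbY e with hσ
  have hσX : ∀ p : ℕ × Fin n, σ (Xf p) = Yf p := by
    intro p
    have := basisEquiv_apply hbX hbY e ⟨Xf p, hsubX (Set.mem_range_self p)⟩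
    rw [hσ, this, heval p]
  -- the image of F under σ contains the dense family Yf
  have hYmem : ∀ m : ℕ, (fun j => z (2*m+1) j) ∈ ((fun x : Fin n → ℂ => fun j => σ (x j)) '' F) := by
    intro m
    refine ⟨fun j => z (2*m) j, hzF m, ?_⟩
    funext j
    exact hσX (m, j)
  have hdense : Dense ((fun x : Fin n → ℂ => fun j => σ (x j)) '' F) := by
    rw [hbasis.dense_iff]
    intro o hob hone
    have : ∃ m, uu m = o := by
      have : o ∈ Set.range uu := huu ▸ hob
      exact this
    obtain ⟨m, rfl⟩ := this
    exact ⟨fun j => z (2*m+1) j, hzU m, hYmem m⟩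
  have himg : ((fun x : Fin n → ℂ => fun j => σ (x j)) '' F) = Set.univ := by
    rw [← (hgal σ).closure_eq]
    exact hdense.closure_eq
  -- conclude
  apply Set.eq_univ_of_forall
  intro v
  have : (fun j => σ (v j)) ∈ ((fun x : Fin n → ℂ => fun j => σ (x j)) '' F) := by
    rw [himg]; trivial
  obtain ⟨x, hxF, hx⟩ := this
  have : x = v := by
    funext j
    have := congrFun hx j
    exact σ.injective this
  rwa [← this]
end
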